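/- For every POMDP G with absorbing target set T and every belief-support U ∈ BeliefWin(G,T), the set of allowed actions Allow(U) is nonempty. -/

import Mathlib

open Finset Filter
open scoped Classical

set_option linter.unusedSectionVars false

noncomputable section

/-- A finite history of a play: the current state together with the
(reversed) list of past steps; an entry `(a, s')` means: the action `a`
was taken from the state `s'` (leading to the next recorded state). -/
abbrev Hist (S A : Type) := S × List (A × S)

/-- The observation–action sequence of a history. -/
def obsHist {S A Z : Type} (O : S → Z) (h : Hist S A) : Z × List (A × Z) :=
  (O h.1, h.2.map fun p => (p.1, O p.2))

/-- An observation-based (randomized, history-dependent) strategy. -/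
structure Strategy (S A Z : Type) [Fintype A] (O : S → Z) where
  act : Hist S A → A → ℝ
  act_nonneg : ∀ h a, 0 ≤ act h a
  act_sum : ∀ h, ∑ a, act h a = 1
  obsBased : ∀ h h', obsHist O h = obsHist O h' → act h = act h'

/-- A partially observable Markov decision process. -/
structure POMDP (S A Z : Type) [Fintype S] [Fintype A] [Fintype Z] where
  δ : S → A → S → ℝ
  δ_nonneg : ∀ s a s', 0 ≤ δ s a s'
  δ_sum : ∀ s a, ∑ s', δ s a s' = 1
  obs : S → Z
  init : S → ℝ
  init_nonneg : ∀ s, 0 ≤ init s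
  init_sum : ∑ s, init s = 1
  init_obs : ∀ s s', 0 < init s → 0 < init s' → obs s = obs s'

namespace POMDP

variable {S A Z : Type} [Fintype S] [Fintype A] [Fintype Z]

/-- The target set `T` consists of absorbing states. -/
def Absorbing (M : POMDP S A Z) (T : Set S) : Prop :=
  ∀ t ∈ T, ∀ a, M.δ t a t = 1

/-- Probability that after `n` steps the process has followed exactly the
history `(s, l)` (so `l` has length `n`). -/
def hprobAux (M : POMDP S A Z) (σ : Strategy S A Z M.obs) : ℕ → S → List (A × S) → ℝ
  | 0, s, l => if l = [] then M.init s else 0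
  | n+1, s, l =>
    match l with
    | [] => 0
    | (a, s') :: rest => hprobAux M σ n s' rest * σ.act (s', rest) a * M.δ s' a s

def hprob (M : POMDP S A Z) (σ : Strategy S A Z M.obs) (n : ℕ) (h : Hist S A) : ℝ :=
  M.hprobAux σ n h.1 h.2

/-- The state sequence of a history visits the set `T`. -/
def visitsT (T : Set S) (h : Hist S A) : Prop :=
  h.1 ∈ T ∨ ∃ p ∈ h.2, p.2 ∈ T

/-- Probability of reaching `T` within the first `n` steps. -/
def probReachBy (M : POMDP S A Z) (T : Set S) (σ : Strategy S A Z M.obs) (n : ℕ) : ℝ :=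
  ∑' h : Hist S A, if visitsT T h then M.hprob σ n h else 0

/-- Probability of the reachability objective `Reach(T)`. -/
def probReach (M : POMDP S A Z) (T : Set S) (σ : Strategy S A Z M.obs) : ℝ :=
  ⨆ n, M.probReachBy T σ n

/-- The strategy `σ` is almost-sure winning for `Reach(T)`. -/
def AlmostSure (M : POMDP S A Z) (T : Set S) (σ : Strategy S A Z M.obs) : Prop :=
  M.probReach T σ = 1

/-- Accumulated cost along a history. -/
def totalCostAux (c : S → A → ℝ) : S → List (A × S) → ℝ
  | _, [] => 0
  | _, (a, s') :: rest => totalCostAux c s' rest + c s' a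

def totalCostH (c : S → A → ℝ) (h : Hist S A) : ℝ := totalCostAux c h.1 h.2

/-- Expected total cost of the first `n` steps, i.e. `E[Total_{n-1}]`
(in particular `E[Total_k] = expTotalSteps M c σ (k+1)`). -/
def expTotalSteps (M : POMDP S A Z) (c : S → A → ℝ) (σ : Strategy S A Z M.obs) (n : ℕ) : ℝ :=
  ∑' h : Hist S A, M.hprob σ n h * totalCostH c h

/-- The value `Val(σ) = E[Total]` of a strategy, as the limit (limsup) of the
expected costs of the finite prefixes. -/
def Val (M : POMDP S A Z) (c : S → A → ℝ) (σ : Strategy S A Z M.obs) : EReal :=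
  Filter.limsup (fun n => ((M.expTotalSteps c σ n : ℝ) : EReal)) Filter.atTop

/-- `optCost`: the infimum of the values of almost-sure winning strategies. -/
def optCost (M : POMDP S A Z) (T : Set S) (c : S → A → ℝ) : EReal :=
  ⨅ σ : {σ : Strategy S A Z M.obs // M.AlmostSure T σ}, M.Val c σ.1

end POMDP

namespace POMDP

variable {S A Z : Type} [Fintype S] [Fintype A] [Fintype Z]

/-- Uniform distribution over a finite set of states. -/
def uniformS (U : Finset S) : S → ℝ := fun s => if s ∈ U then ((U.card : ℝ))⁻¹ else 0

lemma uniformS_nonneg (U : Finset S) (s : S) : 0 ≤ uniformS U s := by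
  unfold uniformS; split_ifs <;> positivity

lemma uniformS_sum (U : Finset S) (h : U.Nonempty) : ∑ s, uniformS U s = 1 := by
  unfold uniformS
  rw [Finset.sum_ite_mem, Finset.univ_inter, Finset.sum_const, nsmul_eq_mul,
    mul_inv_cancel₀]
  exact_mod_cast Finset.card_ne_zero.mpr h

lemma uniformS_mem {U : Finset S} {s : S} (h : 0 < uniformS U s) : s ∈ U := by
  by_contra hc; simp [uniformS, hc] at h

/-- The POMDP `M` with the initial distribution replaced by the uniform
distribution over `U`. -/
def reinit (M : POMDP S A Z) (U : Finset S) (hU : U.Nonempty)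
    (hobs : ∀ s ∈ U, ∀ s' ∈ U, M.obs s = M.obs s') : POMDP S A Z :=
  { M with
    init := uniformS U
    init_nonneg := uniformS_nonneg U
    init_sum := uniformS_sum U hU
    init_obs := fun s s' hs hs' => hobs s (uniformS_mem hs) s' (uniformS_mem hs') }

/-- The POMDP `M` with the initial distribution replaced by the Dirac
distribution at `s0`. -/
def resetDirac (M : POMDP S A Z) (s0 : S) : POMDP S A Z :=
  { M with
    init := fun s => if s = s0 then 1 else 0
    init_nonneg := by intro s; split_ifs <;> norm_num
    init_sum := by simp
    init_obs := by
      intro s s' hs hs'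
      have h1 : s = s0 := by by_contra hc; simp [hc] at hs
      have h2 : s' = s0 := by by_contra hc; simp [hc] at hs'
      rw [h1, h2] }

/-- The set of almost-sure winning belief-supports: those `U` from which
(with the uniform initial distribution on `U`) some strategy wins
`Reach(T)` almost-surely. -/
def BeliefWin (M : POMDP S A Z) (T : Set S) : Set (Finset S) :=
  {U | ∃ (hU : U.Nonempty) (hobs : ∀ s ∈ U, ∀ s' ∈ U, M.obs s = M.obs s'),
      ∃ σ : Strategy S A Z M.obs, (M.reinit U hU hobs).AlmostSure T σ}

/-- Belief-support update. -/
def updateF (M : POMDP S A Z) (U : Finset S) (z : Z) (a : A) : Finset S :=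
  univ.filter (fun t => M.obs t = z ∧ ∃ s ∈ U, 0 < M.δ s a t)

/-- Allowed actions at a belief-support `U`. -/
def AllowSet (M : POMDP S A Z) (T : Set S) (U : Finset S) : Set A :=
  {a | ∀ z, (M.updateF U z a).Nonempty → M.updateF U z a ∈ M.BeliefWin T}

def allowFin (M : POMDP S A Z) (T : Set S) (U : Finset S) : Finset A :=
  univ.filter (· ∈ M.AllowSet T U)

/-- The support of the initial distribution, as a belief-support. -/
def suppInitF (M : POMDP S A Z) : Finset S := univ.filter (fun s => 0 < M.init s)

/-- Belief-support after a history, starting from the initial belief-support `U0`. -/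
def beliefOfFromAux (M : POMDP S A Z) (U0 : Finset S) : S → List (A × S) → Finset S
  | s, [] => U0.filter (fun t => M.obs t = M.obs s)
  | s, (a, s') :: rest => M.updateF (M.beliefOfFromAux U0 s' rest) (M.obs s) a

def beliefOfFrom (M : POMDP S A Z) (U0 : Finset S) (h : Hist S A) : Finset S :=
  M.beliefOfFromAux U0 h.1 h.2

/-- Belief-support after a history (with the initial belief-support being
the support of the initial distribution). -/
def beliefOf (M : POMDP S A Z) (h : Hist S A) : Finset S :=
  M.beliefOfFrom M.suppInitF h

lemma beliefOfFromAux_obs (M : POMDP S A Z) (U0 : Finset S) :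
    ∀ (l l' : List (A × S)) (s s' : S),
      l.map (fun p => (p.1, M.obs p.2)) = l'.map (fun p => (p.1, M.obs p.2)) →
      M.obs s = M.obs s' →
      M.beliefOfFromAux U0 s l = M.beliefOfFromAux U0 s' l'
  | [], [], s, s', _, hs => by simp [beliefOfFromAux, hs]
  | [], (_ :: _), _, _, hmap, _ => by simp at hmap
  | (_ :: _), [], _, _, hmap, _ => by simp at hmap
  | ((a, t) :: r), ((a', t') :: r'), s, s', hmap, hs => by
      simp only [List.map_cons, List.cons.injEq, Prod.mk.injEq] at hmap
      obtain ⟨⟨ha, ht⟩, hr⟩ := hmap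
      simp only [beliefOfFromAux]
      rw [M.beliefOfFromAux_obs U0 r r' t t' hr ht, hs, ha]

/-- Uniform distribution over a finite set of actions. -/
def uniformA (F : Finset A) : A → ℝ := fun a => if a ∈ F then ((F.card : ℝ))⁻¹ else 0

lemma uniformA_nonneg (F : Finset A) (a : A) : 0 ≤ uniformA F a := by
  unfold uniformA; split_ifs <;> positivity

lemma uniformA_sum (F : Finset A) (h : F.Nonempty) : ∑ a, uniformA F a = 1 := by
  unfold uniformA
  rw [Finset.sum_ite_mem, Finset.univ_inter, Finset.sum_const, nsmul_eq_mul,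
    mul_inv_cancel₀]
  exact_mod_cast Finset.card_ne_zero.mpr h

/-- The action distribution of `σ_Allow` (with initial belief-support `U0`):
uniform over the allowed actions of the current belief-support (with a
uniform fallback where no action is allowed). -/
def actAllowFrom (M : POMDP S A Z) (T : Set S) (U0 : Finset S) (h : Hist S A) : A → ℝ :=
  if (M.allowFin T (M.beliefOfFrom U0 h)).Nonempty
  then uniformA (M.allowFin T (M.beliefOfFrom U0 h))
  else uniformA (univ : Finset A)

/-- The belief-support based strategy `σ_Allow` (tracking beliefs from `U0`). -/
def stratAllowFrom [Nonempty A] (M : POMDP S A Z) (T : Set S) (U0 : Finset S) :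
    Strategy S A Z M.obs where
  act := M.actAllowFrom T U0
  act_nonneg := by
    intro h a; unfold actAllowFrom; split_ifs <;> exact uniformA_nonneg _ _
  act_sum := by
    intro h; unfold actAllowFrom; split_ifs with hne
    · exact uniformA_sum _ hne
    · exact uniformA_sum _ univ_nonempty
  obsBased := by
    intro h h' hobs
    have : M.beliefOfFrom U0 h = M.beliefOfFrom U0 h' := by
      unfold beliefOfFrom
      exact M.beliefOfFromAux_obs U0 h.2 h'.2 h.1 h'.1
        (congrArg Prod.snd hobs) (congrArg Prod.fst hobs)
    unfold actAllowFrom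
    rw [this]

/-- `σ_Allow`. -/
def stratAllow [Nonempty A] (M : POMDP S A Z) (T : Set S) : Strategy S A Z M.obs :=
  M.stratAllowFrom T M.suppInitF

/-- `T_Allow(s, U)`: the expected total cost of `σ_Allow` started in the
state `s` with the initial belief-support `U`. -/
def TAllow [Nonempty A] (M : POMDP S A Z) (T : Set S) (c : S → A → ℝ) (s : S) (U : Finset S) :
    EReal :=
  (M.resetDirac s).Val c (M.stratAllowFrom T U)

/-- `U_Allow`: the maximal expected total cost of `σ_Allow` over all
almost-sure winning belief-supports `U` and states `s ∈ U`. -/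
def UAllow [Nonempty A] (M : POMDP S A Z) (T : Set S) (c : S → A → ℝ) : EReal :=
  ⨆ U ∈ M.BeliefWin T, ⨆ s ∈ U, M.TAllow T c s U

end POMDP

namespace POMDP

variable {S A Z : Type} [Fintype S] [Fintype A] [Fintype Z]

/-- Normalization of a nonnegative function into a distribution. -/
def normalize (f : S → ℝ) : S → ℝ := fun t => f t / ∑ u, f u

/-- Support of an information state. -/
def suppF (b : S → ℝ) : Finset S := univ.filter (fun s => b s ≠ 0)

/-- The information state (posterior distribution) after a history. -/
def infoOfAux (M : POMDP S A Z) : S → List (A × S) → S → ℝ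
  | s, [] => normalize (fun t => if M.obs t = M.obs s then M.init t else 0)
  | s, (a, s') :: rest =>
      normalize (fun t => if M.obs t = M.obs s then ∑ u, M.infoOfAux s' rest u * M.δ u a t else 0)

def infoOf (M : POMDP S A Z) (h : Hist S A) : S → ℝ := M.infoOfAux h.1 h.2

lemma infoOfAux_obs (M : POMDP S A Z) :
    ∀ (l l' : List (A × S)) (s s' : S),
      l.map (fun p => (p.1, M.obs p.2)) = l'.map (fun p => (p.1, M.obs p.2)) →
      M.obs s = M.obs s' →
      M.infoOfAux s l = M.infoOfAux s' l'
  | [], [], s, s', _, hs => by simp [infoOfAux, hs]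
  | [], (_ :: _), _, _, hmap, _ => by simp at hmap
  | (_ :: _), [], _, _, hmap, _ => by simp at hmap
  | ((a, t) :: r), ((a', t') :: r'), s, s', hmap, hs => by
      simp only [List.map_cons, List.cons.injEq, Prod.mk.injEq] at hmap
      obtain ⟨⟨ha, ht⟩, hr⟩ := hmap
      simp only [infoOfAux]
      rw [M.infoOfAux_obs r r' t t' hr ht, hs, ha]

/-- Expected one-step cost `c'(b,a)` at an information state. -/
def cinfo (c : S → A → ℝ) (b : S → ℝ) (a : A) : ℝ := ∑ s, b s * c s a

/-- Probability of observing `z` after playing `a` at information state `b`. -/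
def obsProb (M : POMDP S A Z) (b : S → ℝ) (a : A) (z : Z) : ℝ :=
  ∑ t, if M.obs t = z then ∑ u, b u * M.δ u a t else 0

/-- Bayesian update of the information state `b` under action `a` and
observation `z`. -/
def postInfo (M : POMDP S A Z) (b : S → ℝ) (a : A) (z : Z) : S → ℝ :=
  normalize (fun t => if M.obs t = z then ∑ u, b u * M.δ u a t else 0)

/-- The allowed-action-restricted finite-horizon value iteration `V*_n`. -/
def Vstar (M : POMDP S A Z) (T : Set S) (c : S → A → ℝ) : ℕ → (S → ℝ) → ℝ
  | 0, _ => 0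
  | n+1, b =>
    if h : (M.allowFin T (suppF b)).Nonempty then
      (M.allowFin T (suppF b)).inf' h
        (fun a => cinfo c b a + ∑ z, M.obsProb b a z * M.Vstar T c n (M.postInfo b a z))
    else 0

/-- An allowed action attaining the minimum of the value iteration with
`n` steps remaining at information state `b`. -/
def foAct [Nonempty A] (M : POMDP S A Z) (T : Set S) (c : S → A → ℝ) : ℕ → (S → ℝ) → A
  | 0, _ => Classical.arbitrary A
  | n+1, b =>
    if h : (M.allowFin T (suppF b)).Nonempty then
      Classical.choose (Finset.exists_mem_eq_inf' h
        (fun a => cinfo c b a + ∑ z, M.obsProb b a z * M.Vstar T c n (M.postInfo b a z)))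
    else Classical.arbitrary A

/-- The action distribution of the finite-horizon optimal strategy `σFO_k`. -/
def actFO [Nonempty A] (M : POMDP S A Z) (T : Set S) (c : S → A → ℝ) (k : ℕ) (h : Hist S A) :
    A → ℝ :=
  fun a => if a = M.foAct T c (k - h.2.length) (M.infoOf h) then 1 else 0

lemma length_eq_of_obsHist {h h' : Hist S A} {O : S → Z} (he : obsHist O h = obsHist O h') :
    h.2.length = h'.2.length := by
  have := congrArg (fun x => (Prod.snd x).length) he
  simpa [obsHist] using this

/-- The (allowed-action-restricted) finite-horizon optimal strategy `σFO_k`. -/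
def stratFO [Nonempty A] (M : POMDP S A Z) (T : Set S) (c : S → A → ℝ) (k : ℕ) :
    Strategy S A Z M.obs where
  act := M.actFO T c k
  act_nonneg := by intro h a; unfold actFO; split_ifs <;> norm_num
  act_sum := by intro h; unfold actFO; simp
  obsBased := by
    intro h h' hobs
    have hlen : h.2.length = h'.2.length := length_eq_of_obsHist hobs
    have hinfo : M.infoOf h = M.infoOf h' := by
      unfold infoOf
      exact M.infoOfAux_obs h.2 h'.2 h.1 h'.1
        (congrArg Prod.snd hobs) (congrArg Prod.fst hobs)
    unfold actFO
    rw [hlen, hinfo]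

/-- The strategy `σ*_k`: play `σFO_k` for the first `k` steps, then `σ_Allow`. -/
def stratStar [Nonempty A] (M : POMDP S A Z) (T : Set S) (c : S → A → ℝ) (k : ℕ) :
    Strategy S A Z M.obs where
  act := fun h =>
    if h.2.length < k then M.actFO T c k h else M.actAllowFrom T M.suppInitF h
  act_nonneg := by
    intro h a; split_ifs with hl
    · exact (M.stratFO T c k).act_nonneg h a
    · exact (M.stratAllowFrom T M.suppInitF).act_nonneg h a
  act_sum := by
    intro h; split_ifs with hl
    · exact (M.stratFO T c k).act_sum h
    · exact (M.stratAllowFrom T M.suppInitF).act_sum h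
  obsBased := by
    intro h h' hobs
    have hlen : h.2.length = h'.2.length := length_eq_of_obsHist hobs
    rw [hlen]
    split_ifs with hl
    · exact (M.stratFO T c k).obsBased h h' hobs
    · exact (M.stratAllowFrom T M.suppInitF).obsBased h h' hobs

/-- `α_k`: the probability that `T` is not reached within the first `k`
steps when playing `σ*_k`. -/
def alphaK [Nonempty A] (M : POMDP S A Z) (T : Set S) (c : S → A → ℝ) (k : ℕ) : ℝ :=
  1 - M.probReachBy T (M.stratStar T c k) k

end POMDP
section Aux
namespace POMDP
variable {S A Z : Type} [Fintype S] [Fintype A] [Fintype Z]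

/-- Lists of a given length, as a finset. -/
def listsFin : ℕ → Finset (List (A × S))
  | 0 => {([] : List (A × S))}
  | n+1 => ((univ : Finset (A × S)) ×ˢ listsFin n).image fun p => p.1 :: p.2

lemma mem_listsFin : ∀ (n : ℕ) (l : List (A × S)), l ∈ listsFin n ↔ l.length = n
  | 0, l => by simp [listsFin, List.length_eq_zero_iff]
  | n+1, [] => by simp [listsFin]
  | n+1, (p :: r) => by
      simp only [listsFin, Finset.mem_image, Finset.mem_product, Finset.mem_univ, true_and,
        List.length_cons, add_left_inj]
      constructor
      · rintro ⟨q, hq, heq⟩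
        have h2 := (mem_listsFin n q.2).mp hq
        have hle := congrArg List.length heq
        simp only [List.length_cons, add_left_inj] at hle
        rw [← hle, h2]
      · intro hlen
        exact ⟨(p, r), (mem_listsFin n r).mpr hlen, rfl⟩

lemma sum_listsFin_succ (n : ℕ) (g : List (A × S) → ℝ) :
    ∑ l ∈ listsFin (n+1), g l = ∑ p : A × S, ∑ r ∈ listsFin n, g (p :: r) := by
  rw [show (listsFin (n+1) : Finset (List (A × S))) =
      ((univ : Finset (A × S)) ×ˢ listsFin n).image (fun p => p.1 :: p.2) from rfl]
  rw [Finset.sum_image (by rintro ⟨a, r⟩ _ ⟨a', r'⟩ _ h; simpa using h)]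
  rw [Finset.sum_product]

lemma hprobAux_nonneg (M : POMDP S A Z) (σ : Strategy S A Z M.obs) :
    ∀ (n : ℕ) (s : S) (l : List (A × S)), 0 ≤ M.hprobAux σ n s l
  | 0, s, l => by
      simp only [hprobAux]; split_ifs
      exacts [M.init_nonneg s, le_refl 0]
  | n+1, s, [] => by simp [hprobAux]
  | n+1, s, (a, s') :: r => by
      have h1 := hprobAux_nonneg M σ n s' r
      simp only [hprobAux]
      exact mul_nonneg (mul_nonneg h1 (σ.act_nonneg _ _)) (M.δ_nonneg _ _ _)

lemma hprobAux_length (M : POMDP S A Z) (σ : Strategy S A Z M.obs) :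
    ∀ (n : ℕ) (s : S) (l : List (A × S)), l.length ≠ n → M.hprobAux σ n s l = 0
  | 0, s, l, h => by
      simp only [hprobAux]
      rw [if_neg]; intro hc; subst hc; simp at h
  | n+1, s, [], _ => by simp [hprobAux]
  | n+1, s, (a, s') :: r, h => by
      simp only [hprobAux]
      rw [hprobAux_length M σ n s' r (by simpa using h), zero_mul, zero_mul]

/-- The initial state of a history. -/
def startS : S → List (A × S) → S
  | s, [] => s
  | _, (_, s') :: r => startS s' r

lemma hprobAux_resetDirac_ne (M : POMDP S A Z) (σ : Strategy S A Z M.obs) (t : S) :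
    ∀ (n : ℕ) (s : S) (l : List (A × S)), startS s l ≠ t →
      (M.resetDirac t).hprobAux σ n s l = 0
  | 0, s, l, h => by
      simp only [hprobAux]
      split_ifs with hl
      · subst hl; simp only [startS] at h; simp [resetDirac, h]
      · rfl
  | n+1, s, [], _ => by simp [hprobAux]
  | n+1, s, (a, s') :: r, h => by
      simp only [hprobAux]
      rw [hprobAux_resetDirac_ne M σ t n s' r (by simpa [startS] using h), zero_mul, zero_mul]

lemma hprobAux_eq_start (M : POMDP S A Z) (σ : Strategy S A Z M.obs) :
    ∀ (n : ℕ) (s : S) (l : List (A × S)),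
      M.hprobAux σ n s l = M.init (startS s l) * (M.resetDirac (startS s l)).hprobAux σ n s l
  | 0, s, [] => by simp [hprobAux, startS, resetDirac]
  | 0, s, (a, s') :: r => by simp [hprobAux]
  | n+1, s, [] => by simp [hprobAux]
  | n+1, s, (a, s') :: r => by
      simp only [hprobAux, startS]
      rw [hprobAux_eq_start M σ n s' r]
      show M.init (startS s' r) * (M.resetDirac (startS s' r)).hprobAux σ n s' r *
          σ.act (s', r) a * M.δ s' a s =
        M.init (startS s' r) *
          ((M.resetDirac (startS s' r)).hprobAux σ n s' r * σ.act (s', r) a * M.δ s' a s)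
      ring

lemma hprobAux_init_linear (M : POMDP S A Z) (σ : Strategy S A Z M.obs)
    (n : ℕ) (s : S) (l : List (A × S)) :
    M.hprobAux σ n s l = ∑ t, M.init t * (M.resetDirac t).hprobAux σ n s l := by
  rw [Finset.sum_eq_single (startS s l)]
  · exact hprobAux_eq_start M σ n s l
  · intro t _ ht
    rw [hprobAux_resetDirac_ne M σ t n s l (Ne.symm ht), mul_zero]
  · simp

end POMDP
end Aux

section Eqns
namespace POMDP
variable {S A Z : Type} [Fintype S] [Fintype A] [Fintype Z]

lemma hprobAux_zero (M : POMDP S A Z) (σ : Strategy S A Z M.obs) (s : S) (l : List (A × S)) :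
    M.hprobAux σ 0 s l = if l = [] then M.init s else 0 := by simp [hprobAux]

lemma hprobAux_succ_nil (M : POMDP S A Z) (σ : Strategy S A Z M.obs) (n : ℕ) (s : S) :
    M.hprobAux σ (n+1) s [] = 0 := by simp [hprobAux]

lemma hprobAux_succ_cons (M : POMDP S A Z) (σ : Strategy S A Z M.obs) (n : ℕ) (s : S)
    (a : A) (s' : S) (r : List (A × S)) :
    M.hprobAux σ (n+1) s ((a, s') :: r) =
      M.hprobAux σ n s' r * σ.act (s', r) a * M.δ s' a s := by simp [hprobAux]

end POMDP
end Eqns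
section Aux2
namespace POMDP
variable {S A Z : Type} [Fintype S] [Fintype A] [Fintype Z]

/-- The strategy after the first step `(a0, s0)`. -/
def shiftStrat {O : S → Z} (σ : Strategy S A Z O) (a0 : A) (s0 : S) : Strategy S A Z O where
  act h := σ.act (h.1, h.2 ++ [(a0, s0)])
  act_nonneg h a := σ.act_nonneg _ a
  act_sum h := σ.act_sum _
  obsBased h h' he := σ.obsBased _ _ (by
    have h1 := congrArg Prod.fst he
    have h2 := congrArg Prod.snd he
    simp only [obsHist] at h1 h2
    simp [obsHist, List.map_append, h1, h2])

lemma hprobAux_act_congr (M : POMDP S A Z) (σ₁ σ₂ : Strategy S A Z M.obs)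
    (hact : σ₁.act = σ₂.act) :
    ∀ (n : ℕ) (s : S) (l : List (A × S)), M.hprobAux σ₁ n s l = M.hprobAux σ₂ n s l
  | 0, s, l => by simp [hprobAux]
  | n+1, s, [] => by simp [hprobAux]
  | n+1, s, (a, s') :: r => by
      rw [hprobAux_succ_cons, hprobAux_succ_cons, hprobAux_act_congr M σ₁ σ₂ hact n s' r, hact]

/-- First-step decomposition of the history probability. -/
lemma hprobAux_append (M : POMDP S A Z) (σ : Strategy S A Z M.obs) (a0 : A) (s0 : S) :
    ∀ (l : List (A × S)) (n : ℕ) (s : S),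
      M.hprobAux σ (n+1) s (l ++ [(a0, s0)]) =
        M.init s0 * σ.act (s0, []) a0 *
          ∑ t, M.δ s0 a0 t * (M.resetDirac t).hprobAux (shiftStrat σ a0 s0) n s l
  | [], n, s => by
      cases n with
      | zero =>
          rw [List.nil_append, hprobAux_succ_cons, hprobAux_zero]
          rw [Finset.sum_eq_single s]
          · simp only [hprobAux_zero, if_pos rfl]
            show M.init s0 * σ.act (s0, []) a0 * M.δ s0 a0 s =
              M.init s0 * σ.act (s0, []) a0 *
                (M.δ s0 a0 s * if (s : S) = s then (1 : ℝ) else 0)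
            simp
          · intro t _ ht
            rw [hprobAux_zero, if_pos rfl]
            show M.δ s0 a0 t * (if (s : S) = t then (1 : ℝ) else 0) = 0
            simp [Ne.symm ht]
          · simp
      | succ m =>
          rw [List.nil_append, hprobAux_succ_cons, hprobAux_succ_nil]
          have : ∀ t : S, (M.resetDirac t).hprobAux (shiftStrat σ a0 s0) (m+1) s [] = 0 :=
            fun t => hprobAux_succ_nil _ _ _ _
          simp [this]
  | (a1, s1) :: r, n, s => by
      cases n with
      | zero =>
          rw [List.cons_append, hprobAux_succ_cons, hprobAux_zero, if_neg (by simp)]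
          have : ∀ t : S, (M.resetDirac t).hprobAux (shiftStrat σ a0 s0) 0 s ((a1, s1) :: r) = 0 :=
            fun t => by rw [hprobAux_zero, if_neg (by simp)]
          simp [this]
      | succ m =>
          rw [List.cons_append, hprobAux_succ_cons, hprobAux_append M σ a0 s0 r m s1]
          have hact : σ.act (s1, r ++ [(a0, s0)]) a1 = (shiftStrat σ a0 s0).act (s1, r) a1 := rfl
          have hR : ∀ t : S, (M.resetDirac t).hprobAux (shiftStrat σ a0 s0) (m+1) s ((a1, s1) :: r)
              = (M.resetDirac t).hprobAux (shiftStrat σ a0 s0) m s1 r *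
                  (shiftStrat σ a0 s0).act (s1, r) a1 * M.δ s1 a1 s :=
            fun t => hprobAux_succ_cons _ _ _ _ _ _ _
          rw [hact]
          simp only [hR, Finset.mul_sum, Finset.sum_mul]
          apply Finset.sum_congr rfl
          intro t _
          ring

end POMDP
end Aux2
section Aux3
namespace POMDP
variable {S A Z : Type} [Fintype S] [Fintype A] [Fintype Z]

def histFin (n : ℕ) : Finset (Hist S A) := (univ : Finset S) ×ˢ listsFin n

lemma mem_histFin {n : ℕ} {h : Hist S A} : h ∈ histFin n ↔ h.2.length = n := by
  cases h with
  | mk s l => simp [histFin, mem_listsFin]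

/-- The finite-sum version of the fail probability. -/
def failF (M : POMDP S A Z) (T : Set S) (σ : Strategy S A Z M.obs) (n : ℕ) : ℝ :=
  ∑ h ∈ histFin n, if visitsT T h then 0 else M.hprob σ n h

lemma failF_nonneg (M : POMDP S A Z) (T : Set S) (σ : Strategy S A Z M.obs) (n : ℕ) :
    0 ≤ failF M T σ n := by
  apply Finset.sum_nonneg
  intro h _
  split_ifs
  · exact le_refl 0
  · exact hprobAux_nonneg M σ n h.1 h.2

lemma probReachBy_eq_sum (M : POMDP S A Z) (T : Set S) (σ : Strategy S A Z M.obs) (n : ℕ) :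
    M.probReachBy T σ n = ∑ h ∈ histFin n, if visitsT T h then M.hprob σ n h else 0 := by
  apply tsum_eq_sum
  intro h hh
  split_ifs
  · exact by_contra fun hne => hh (mem_histFin.mpr (by
      by_contra hlen
      exact hne (hprobAux_length M σ n h.1 h.2 hlen)))
  · rfl

lemma totalMass (M : POMDP S A Z) (σ : Strategy S A Z M.obs) :
    ∀ n : ℕ, ∑ h ∈ histFin n, M.hprob σ n h = 1
  | 0 => by
      rw [histFin, Finset.sum_product]
      show ∑ s : S, ∑ l ∈ listsFin 0, M.hprobAux σ 0 s l = 1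
      have h0 : ∀ s : S, ∑ l ∈ listsFin 0, M.hprobAux σ 0 s l = M.init s := by
        intro s
        rw [show (listsFin 0 : Finset (List (A × S))) = {[]} from rfl, Finset.sum_singleton,
          hprobAux_zero, if_pos rfl]
      simp only [h0]
      exact M.init_sum
  | n+1 => by
      rw [histFin, Finset.sum_product]
      show ∑ s : S, ∑ l ∈ listsFin (n+1), M.hprobAux σ (n+1) s l = 1
      have step : ∀ s : S, ∑ l ∈ listsFin (n+1), M.hprobAux σ (n+1) s l =
          ∑ p : A × S, ∑ r ∈ listsFin n, M.hprobAux σ n p.2 r * σ.act (p.2, r) p.1 *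
            M.δ p.2 p.1 s := by
        intro s
        rw [sum_listsFin_succ]
        exact Finset.sum_congr rfl fun p _ => Finset.sum_congr rfl fun r _ =>
          hprobAux_succ_cons M σ n s p.1 p.2 r
      simp only [step]
      rw [Finset.sum_comm]
      have h1 : ∀ p : A × S, ∑ s : S, ∑ r ∈ listsFin n,
          M.hprobAux σ n p.2 r * σ.act (p.2, r) p.1 * M.δ p.2 p.1 s =
          ∑ r ∈ listsFin n, M.hprobAux σ n p.2 r * σ.act (p.2, r) p.1 := by
        intro p
        rw [Finset.sum_comm]
        apply Finset.sum_congr rfl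
        intro r _
        rw [← Finset.mul_sum, M.δ_sum, mul_one]
      simp only [h1]
      rw [Fintype.sum_prod_type]
      dsimp only
      rw [Finset.sum_comm]
      have h2 : ∀ s' : S, ∑ a : A, ∑ r ∈ listsFin n,
          M.hprobAux σ n s' r * σ.act (s', r) a = ∑ r ∈ listsFin n, M.hprobAux σ n s' r := by
        intro s'
        rw [Finset.sum_comm]
        apply Finset.sum_congr rfl
        intro r _
        rw [← Finset.mul_sum, σ.act_sum, mul_one]
      simp only [h2]
      have IH := totalMass M σ n
      rw [histFin, Finset.sum_product] at IH
      exact IH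

lemma probReachBy_eq_one_sub (M : POMDP S A Z) (T : Set S) (σ : Strategy S A Z M.obs) (n : ℕ) :
    M.probReachBy T σ n = 1 - failF M T σ n := by
  rw [probReachBy_eq_sum, eq_sub_iff_add_eq, failF, ← Finset.sum_add_distrib, ← totalMass M σ n]
  apply Finset.sum_congr rfl
  intro h _
  split_ifs <;> ring

end POMDP
end Aux3
section Aux4
namespace POMDP
variable {S A Z : Type} [Fintype S] [Fintype A] [Fintype Z]

lemma visitsT_cons {T : Set S} {s : S} {p : A × S} {r : List (A × S)} :
    visitsT T ((s, p :: r) : Hist S A) ↔ s ∈ T ∨ visitsT T ((p.2, r) : Hist S A) := by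
  simp only [visitsT, List.mem_cons]
  constructor
  · rintro (h | ⟨q, (rfl | hq), hq2⟩)
    · exact Or.inl h
    · exact Or.inr (Or.inl hq2)
    · exact Or.inr (Or.inr ⟨q, hq, hq2⟩)
  · rintro (h | h | ⟨q, hq, hq2⟩)
    · exact Or.inl h
    · exact Or.inr ⟨p, Or.inl rfl, h⟩
    · exact Or.inr ⟨q, Or.inr hq, hq2⟩

lemma visitsT_append {T : Set S} {s s0 : S} {a0 : A} {l : List (A × S)} :
    visitsT T ((s, l ++ [(a0, s0)]) : Hist S A) ↔ visitsT T ((s, l) : Hist S A) ∨ s0 ∈ T := by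
  simp only [visitsT, List.mem_append, List.mem_singleton]
  constructor
  · rintro (h | ⟨q, (hq | rfl), hq2⟩)
    · exact Or.inl (Or.inl h)
    · exact Or.inl (Or.inr ⟨q, hq, hq2⟩)
    · exact Or.inr hq2
  · rintro ((h | ⟨q, hq, hq2⟩) | h)
    · exact Or.inl h
    · exact Or.inr ⟨q, Or.inl hq, hq2⟩
    · exact Or.inr ⟨(a0, s0), Or.inr rfl, h⟩

lemma startS_visits {T : Set S} :
    ∀ (l : List (A × S)) (s : S), startS s l ∈ T → visitsT T ((s, l) : Hist S A)
  | [], s, h => Or.inl h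
  | (a, s') :: r, s, h => by
      have := startS_visits r s' h
      exact visitsT_cons.mpr (Or.inr this)

/-- A generalized one-step collapsing sum. -/
lemma sum_step (M : POMDP S A Z) (σ : Strategy S A Z M.obs) (n : ℕ) (F : S → List (A × S) → ℝ) :
    ∑ s : S, ∑ p : A × S, ∑ r ∈ listsFin n,
        F p.2 r * σ.act (p.2, r) p.1 * M.δ p.2 p.1 s
      = ∑ s' : S, ∑ r ∈ listsFin n, F s' r := by
  rw [Finset.sum_comm]
  have h1 : ∀ p : A × S, ∑ s : S, ∑ r ∈ listsFin n,
      F p.2 r * σ.act (p.2, r) p.1 * M.δ p.2 p.1 s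
      = ∑ r ∈ listsFin n, F p.2 r * σ.act (p.2, r) p.1 := by
    intro p
    rw [Finset.sum_comm]
    apply Finset.sum_congr rfl
    intro r _
    rw [← Finset.mul_sum, M.δ_sum, mul_one]
  simp only [h1]
  rw [Fintype.sum_prod_type]
  dsimp only
  rw [Finset.sum_comm]
  have h2 : ∀ s' : S, ∑ a : A, ∑ r ∈ listsFin n,
      F s' r * σ.act (s', r) a = ∑ r ∈ listsFin n, F s' r := by
    intro s'
    rw [Finset.sum_comm]
    apply Finset.sum_congr rfl
    intro r _
    rw [← Finset.mul_sum, σ.act_sum, mul_one]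
  simp only [h2]

lemma failF_succ_le (M : POMDP S A Z) (T : Set S) (σ : Strategy S A Z M.obs) (n : ℕ) :
    failF M T σ (n+1) ≤ failF M T σ n := by
  have expand : failF M T σ (n+1) = ∑ s : S, ∑ p : A × S, ∑ r ∈ listsFin n,
      (if visitsT T ((s, p :: r) : Hist S A) then 0 else
        M.hprobAux σ n p.2 r * σ.act (p.2, r) p.1 * M.δ p.2 p.1 s) := by
    rw [failF, histFin, Finset.sum_product]
    apply Finset.sum_congr rfl
    intro s _
    rw [sum_listsFin_succ]
    apply Finset.sum_congr rfl
    intro p _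
    apply Finset.sum_congr rfl
    intro r _
    by_cases hv : visitsT T ((s, p :: r) : Hist S A)
    · rw [if_pos hv, if_pos hv]
    · rw [if_neg hv, if_neg hv]
      show M.hprobAux σ (n+1) s (p :: r) = _
      rw [show (p : A × S) = (p.1, p.2) from rfl, hprobAux_succ_cons]
  rw [expand]
  have bound : ∑ s : S, ∑ p : A × S, ∑ r ∈ listsFin n,
      (if visitsT T ((s, p :: r) : Hist S A) then 0 else
        M.hprobAux σ n p.2 r * σ.act (p.2, r) p.1 * M.δ p.2 p.1 s)
      ≤ ∑ s : S, ∑ p : A × S, ∑ r ∈ listsFin n,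
        (if visitsT T ((p.2, r) : Hist S A) then 0 else M.hprobAux σ n p.2 r) *
          σ.act (p.2, r) p.1 * M.δ p.2 p.1 s := by
    apply Finset.sum_le_sum; intro s _
    apply Finset.sum_le_sum; intro p _
    apply Finset.sum_le_sum; intro r _
    by_cases hv : visitsT T ((s, p :: r) : Hist S A)
    · rw [if_pos hv]
      apply mul_nonneg; apply mul_nonneg
      · split_ifs
        · exact le_refl 0
        · exact hprobAux_nonneg M σ n p.2 r
      · exact σ.act_nonneg _ _
      · exact M.δ_nonneg _ _ _
    · rw [if_neg hv]
      have hv2 : ¬ visitsT T ((p.2, r) : Hist S A) := fun hc =>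
        hv (visitsT_cons.mpr (Or.inr hc))
      rw [if_neg hv2]
  refine le_trans bound ?_
  rw [sum_step M σ n (fun s' r => if visitsT T ((s', r) : Hist S A) then 0 else M.hprobAux σ n s' r)]
  rw [failF, histFin, Finset.sum_product]
  exact le_of_eq rfl

lemma failF_antitone (M : POMDP S A Z) (T : Set S) (σ : Strategy S A Z M.obs) :
    Antitone (failF M T σ) :=
  antitone_nat_of_succ_le (fun n => failF_succ_le M T σ n)

lemma failF_init_linear (M : POMDP S A Z) (T : Set S) (σ : Strategy S A Z M.obs) (n : ℕ) :
    failF M T σ n = ∑ t, M.init t * failF (M.resetDirac t) T σ n := by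
  have : ∀ t, M.init t * failF (M.resetDirac t) T σ n
      = ∑ h ∈ histFin n, (if visitsT T h then 0 else
          M.init t * (M.resetDirac t).hprobAux σ n h.1 h.2) := by
    intro t
    delta failF; rw [Finset.mul_sum]
    apply Finset.sum_congr rfl
    intro h _
    split_ifs
    · rw [mul_zero]
    · rfl
  simp only [this]
  rw [Finset.sum_comm, failF]
  apply Finset.sum_congr rfl
  intro h _
  split_ifs
  · simp
  · exact hprobAux_init_linear M σ n h.1 h.2

lemma failF_resetDirac_mem (M : POMDP S A Z) (T : Set S) (σ : Strategy S A Z M.obs)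
    {t : S} (ht : t ∈ T) (n : ℕ) : failF (M.resetDirac t) T σ n = 0 := by
  apply Finset.sum_eq_zero
  intro h _
  split_ifs with hv
  · rfl
  · apply hprobAux_resetDirac_ne
    intro hc
    exact hv (startS_visits h.2 h.1 (hc ▸ ht))

lemma failF_shift_le (M : POMDP S A Z) (T : Set S) (σ : Strategy S A Z M.obs)
    (a0 : A) (s0 : S) (hs0 : s0 ∉ T) (t : S) (n : ℕ) :
    M.init s0 * σ.act (s0, []) a0 * M.δ s0 a0 t *
        failF (M.resetDirac t) T (shiftStrat σ a0 s0) n ≤ failF M T σ (n+1) := by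
  set σ' := shiftStrat σ a0 s0 with hσ'
  set e : Hist S A → Hist S A := fun h => (h.1, h.2 ++ [(a0, s0)]) with he
  have hsub : (histFin n).image e ⊆ histFin (n+1) := by
    intro h hh
    obtain ⟨h', hh', rfl⟩ := Finset.mem_image.mp hh
    rw [mem_histFin] at hh' ⊢
    simp [he, hh']
  have himg : ∑ h ∈ (histFin n).image e,
        (if visitsT T h then 0 else M.hprob σ (n+1) h) ≤ failF M T σ (n+1) := by
    rw [failF]
    apply Finset.sum_le_sum_of_subset_of_nonneg hsub
    intro h _ _
    split_ifs
    · exact le_refl 0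
    · exact hprobAux_nonneg M σ (n+1) h.1 h.2
  rw [Finset.sum_image (by
    intro x _ y _ hxy
    simp only [he, Prod.mk.injEq] at hxy
    have h3 : x.2 = y.2 := by
      have := congrArg List.dropLast hxy.2
      simpa [List.dropLast_concat] using this
    exact Prod.ext hxy.1 h3)] at himg
  refine le_trans ?_ himg
  rw [failF, Finset.mul_sum]
  apply Finset.sum_le_sum
  intro h hh
  by_cases hv : visitsT T h
  · have hv' : visitsT T (e h) := by
      show visitsT T ((h.1, h.2 ++ [(a0, s0)]) : Hist S A)
      exact visitsT_append.mpr (Or.inl (by cases h; exact hv))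
    rw [if_pos hv, if_pos (by cases h; exact hv')]
    rw [mul_zero]
  · have hv' : ¬ visitsT T (e h) := by
      show ¬ visitsT T ((h.1, h.2 ++ [(a0, s0)]) : Hist S A)
      rw [visitsT_append]
      rintro (hc | hc)
      · exact hv (by cases h; exact hc)
      · exact hs0 hc
    rw [if_neg hv, if_neg (by cases h; exact hv')]
    show M.init s0 * σ.act (s0, []) a0 * M.δ s0 a0 t * (M.resetDirac t).hprobAux σ' n h.1 h.2
      ≤ M.hprobAux σ (n+1) h.1 (h.2 ++ [(a0, s0)])
    rw [hprobAux_append M σ a0 s0 h.2 n h.1]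
    have hsingle : M.δ s0 a0 t * (M.resetDirac t).hprobAux σ' n h.1 h.2
        ≤ ∑ t' : S, M.δ s0 a0 t' * (M.resetDirac t').hprobAux σ' n h.1 h.2 := by
      apply Finset.single_le_sum (f := fun t' : S =>
        M.δ s0 a0 t' * (M.resetDirac t').hprobAux σ' n h.1 h.2)
      · intro t' _
        exact mul_nonneg (M.δ_nonneg _ _ _) (hprobAux_nonneg (M.resetDirac t') σ' n h.1 h.2)
      · exact Finset.mem_univ t
    calc M.init s0 * σ.act (s0, []) a0 * M.δ s0 a0 t * (M.resetDirac t).hprobAux σ' n h.1 h.2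
        = M.init s0 * σ.act (s0, []) a0 *
            (M.δ s0 a0 t * (M.resetDirac t).hprobAux σ' n h.1 h.2) := by ring
      _ ≤ M.init s0 * σ.act (s0, []) a0 *
            ∑ t' : S, M.δ s0 a0 t' * (M.resetDirac t').hprobAux σ' n h.1 h.2 := by
          apply mul_le_mul_of_nonneg_left hsingle
          exact mul_nonneg (M.init_nonneg s0) (σ.act_nonneg _ _)

end POMDP
end Aux4
section Aux5
namespace POMDP
variable {S A Z : Type} [Fintype S] [Fintype A] [Fintype Z]

lemma probReachBy_le_one (M : POMDP S A Z) (T : Set S) (σ : Strategy S A Z M.obs) (n : ℕ) :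
    M.probReachBy T σ n ≤ 1 := by
  rw [probReachBy_eq_one_sub]
  linarith [failF_nonneg M T σ n]

lemma almostSure_of_failF (M : POMDP S A Z) (T : Set S) (σ : Strategy S A Z M.obs)
    (h : ∀ ε > (0:ℝ), ∃ n, failF M T σ n ≤ ε) : M.AlmostSure T σ := by
  unfold AlmostSure probReach
  apply le_antisymm
  · exact ciSup_le (fun n => probReachBy_le_one M T σ n)
  · have hbdd : BddAbove (Set.range fun n => M.probReachBy T σ n) :=
      ⟨1, by rintro x ⟨n, rfl⟩; exact probReachBy_le_one M T σ n⟩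
    apply le_of_forall_pos_le_add
    intro ε hε
    obtain ⟨n, hn⟩ := h ε hε
    have h1 : 1 - ε ≤ M.probReachBy T σ n := by
      rw [probReachBy_eq_one_sub]; linarith
    have h2 : M.probReachBy T σ n ≤ ⨆ m, M.probReachBy T σ m := le_ciSup hbdd n
    linarith

lemma failF_small_of_almostSure (M : POMDP S A Z) (T : Set S) (σ : Strategy S A Z M.obs)
    (h : M.AlmostSure T σ) : ∀ ε > (0:ℝ), ∃ n, failF M T σ n ≤ ε := by
  intro ε hε
  by_contra hc
  push_neg at hc
  have h1 : ∀ n, M.probReachBy T σ n ≤ 1 - ε := fun n => by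
    rw [probReachBy_eq_one_sub]
    linarith [le_of_lt (hc n)]
  have h2 : M.probReach T σ ≤ 1 - ε := ciSup_le h1
  unfold AlmostSure at h
  rw [h] at h2
  linarith

lemma delta_absorbing_ne (M : POMDP S A Z) {T : Set S} (habs : M.Absorbing T)
    {s0 t : S} (hs0 : s0 ∈ T) (ht : t ≠ s0) (a : A) : M.δ s0 a t = 0 := by
  have h1 := habs s0 hs0 a
  have hsum := M.δ_sum s0 a
  have hsplit : M.δ s0 a s0 + ∑ s ∈ univ.erase s0, M.δ s0 a s = 1 := by
    rw [Finset.add_sum_erase _ _ (Finset.mem_univ s0)]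
    exact hsum
  have hz : ∑ s ∈ univ.erase s0, M.δ s0 a s = 0 := by rw [h1] at hsplit; linarith
  exact (Finset.sum_eq_zero_iff_of_nonneg (fun s _ => M.δ_nonneg s0 a s)).mp hz t
    (Finset.mem_erase.mpr ⟨ht, Finset.mem_univ t⟩)

end POMDP
end Aux5
/-- For every almost-sure winning belief-support `U`, the set
of allowed actions `Allow(U)` is nonempty. -/
theorem allowSet_nonempty
    {S A Z : Type} [Fintype S] [Fintype A] [Fintype Z]
    (M : POMDP S A Z) (T : Set S)
    (habs : M.Absorbing T)
    (U : Finset S) (hU : U ∈ M.BeliefWin T) :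
    (M.AllowSet T U).Nonempty := by
  classical
  obtain ⟨hUne, hobs, σ, hAS⟩ := hU
  set Mt := M.reinit U hUne hobs with hMt
  obtain ⟨sstar, hsstar⟩ := id hUne
  obtain ⟨a, ha⟩ : ∃ a, 0 < σ.act ((sstar, ([] : List (A × S))) : Hist S A) a := by
    by_contra hc
    push_neg at hc
    have hz : ∀ a, σ.act ((sstar, ([] : List (A × S))) : Hist S A) a = 0 := fun a =>
      le_antisymm (hc a) (σ.act_nonneg _ a)
    have := σ.act_sum ((sstar, ([] : List (A × S))) : Hist S A)
    rw [Finset.sum_congr rfl (fun a _ => hz a)] at this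
    simp at this
  refine ⟨a, ?_⟩
  intro z hVne
  have hmemV : ∀ t, t ∈ M.updateF U z a ↔ M.obs t = z ∧ ∃ s ∈ U, 0 < M.δ s a t := by
    intro t
    simp [POMDP.updateF]
  have hobsV : ∀ s ∈ M.updateF U z a, ∀ s' ∈ M.updateF U z a, M.obs s = M.obs s' := by
    intro s hs s' hs'
    rw [((hmemV s).mp hs).1, ((hmemV s').mp hs').1]
  refine ⟨hVne, hobsV, ?_⟩
  set σ' := POMDP.shiftStrat σ a sstar with hσ'
  refine ⟨σ', ?_⟩
  apply POMDP.almostSure_of_failF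
  intro ε hε
  have hkey : ∀ t : S, ∃ n, t ∈ M.updateF U z a →
      POMDP.failF (M.resetDirac t) T σ' n ≤ ε := by
    intro t
    by_cases htV : t ∈ M.updateF U z a
    swap
    · exact ⟨0, fun hc => absurd hc htV⟩
    by_cases htT : t ∈ T
    · exact ⟨0, fun _ => by rw [POMDP.failF_resetDirac_mem M T σ' htT]; linarith⟩
    obtain ⟨hz', s0, hs0U, hδ⟩ := (hmemV t).mp htV
    have hs0T : s0 ∉ T := by
      intro hc
      have hne : t ≠ s0 := fun he => htT (he ▸ hc)
      rw [POMDP.delta_absorbing_ne M habs hc hne a] at hδ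
      exact lt_irrefl 0 hδ
    have hacts : σ.act ((s0, ([] : List (A × S))) : Hist S A) =
        σ.act ((sstar, ([] : List (A × S))) : Hist S A) :=
      σ.obsBased _ _ (by simp [obsHist, hobs s0 hs0U sstar hsstar])
    have hshift : (POMDP.shiftStrat σ a s0).act = σ'.act := by
      funext h
      show σ.act (h.1, h.2 ++ [(a, s0)]) = σ.act (h.1, h.2 ++ [(a, sstar)])
      apply σ.obsBased
      simp [obsHist, List.map_append, hobs s0 hs0U sstar hsstar]
    have hinitpos : 0 < Mt.init s0 := by
      show 0 < POMDP.uniformS U s0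
      have hcard : (0:ℝ) < (U.card : ℝ) := by
        exact_mod_cast Finset.card_pos.mpr ⟨sstar, hsstar⟩
      simp only [POMDP.uniformS, if_pos hs0U]
      exact inv_pos.mpr hcard
    have hactpos : 0 < σ.act ((s0, ([] : List (A × S))) : Hist S A) a := by
      rw [hacts]; exact ha
    have hδpos : 0 < Mt.δ s0 a t := hδ
    have hcpos : 0 < Mt.init s0 * σ.act ((s0, ([] : List (A × S))) : Hist S A) a *
        Mt.δ s0 a t := mul_pos (mul_pos hinitpos hactpos) hδpos
    obtain ⟨m, hm⟩ := POMDP.failF_small_of_almostSure Mt T σ hAS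
      ((Mt.init s0 * σ.act ((s0, ([] : List (A × S))) : Hist S A) a * Mt.δ s0 a t) * ε)
      (mul_pos hcpos hε)
    have hcongr : POMDP.failF (Mt.resetDirac t) T (POMDP.shiftStrat σ a s0) m =
        POMDP.failF (Mt.resetDirac t) T σ' m := by
      unfold POMDP.failF
      apply Finset.sum_congr rfl
      intro h _
      split_ifs
      · rfl
      · exact POMDP.hprobAux_act_congr (Mt.resetDirac t) _ _ hshift m h.1 h.2
    have hb := POMDP.failF_shift_le Mt T σ a s0 hs0T t m
    rw [hcongr] at hb
    have h3 : (Mt.init s0 * σ.act ((s0, ([] : List (A × S))) : Hist S A) a * Mt.δ s0 a t) *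
        POMDP.failF (Mt.resetDirac t) T σ' m ≤
        (Mt.init s0 * σ.act ((s0, ([] : List (A × S))) : Hist S A) a * Mt.δ s0 a t) * ε :=
      le_trans hb (le_trans (POMDP.failF_succ_le Mt T σ m) hm)
    have h4 := le_of_mul_le_mul_left h3 hcpos
    exact ⟨m, fun _ => h4⟩
  choose nfun hn using hkey
  refine ⟨Finset.univ.sup nfun, ?_⟩
  refine (POMDP.failF_init_linear (M.reinit (M.updateF U z a) hVne hobsV) T σ' _).trans_le ?_
  have hterm : ∀ t : S,
      (M.reinit (M.updateF U z a) hVne hobsV).init t *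
        POMDP.failF ((M.reinit (M.updateF U z a) hVne hobsV).resetDirac t) T σ'
          (Finset.univ.sup nfun)
      ≤ POMDP.uniformS (M.updateF U z a) t * ε := by
    intro t
    by_cases htV : t ∈ M.updateF U z a
    · have h1 : POMDP.failF (M.resetDirac t) T σ' (Finset.univ.sup nfun) ≤ ε :=
        le_trans (POMDP.failF_antitone (M.resetDirac t) T σ'
          (Finset.le_sup (Finset.mem_univ t))) (hn t htV)
      show POMDP.uniformS (M.updateF U z a) t *
          POMDP.failF (M.resetDirac t) T σ' (Finset.univ.sup nfun) ≤ _
      exact mul_le_mul_of_nonneg_left h1 (POMDP.uniformS_nonneg _ t)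
    · show POMDP.uniformS (M.updateF U z a) t *
          POMDP.failF (M.resetDirac t) T σ' (Finset.univ.sup nfun) ≤ _
      rw [show POMDP.uniformS (M.updateF U z a) t = 0 from by
        simp [POMDP.uniformS, htV]]
      rw [zero_mul, zero_mul]
  calc ∑ t, (M.reinit (M.updateF U z a) hVne hobsV).init t *
        POMDP.failF ((M.reinit (M.updateF U z a) hVne hobsV).resetDirac t) T σ'
          (Finset.univ.sup nfun)
      ≤ ∑ t, POMDP.uniformS (M.updateF U z a) t * ε := Finset.sum_le_sum fun t _ => hterm t
    _ = ε := by
        rw [← Finset.sum_mul, POMDP.uniformS_sum _ hVne, one_mul]
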